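/- Let M be an m×n real matrix, α ∈ ℝ, a ∈ ℝᵐ, b ∈ ℝⁿ, and define u = (I + α²MMᵀ)⁻¹(a + α·M·b) and v = (I + α²MᵀM)⁻¹(−b + α·Mᵀ·a). Then α²·(‖Mᵀu‖² + ‖Mv‖²) ≤ ‖a‖² + ‖b‖². -/

import Mathlib

open Matrix

lemma cgo_aux_posdef {k l : ℕ} (N : Matrix (Fin k) (Fin l) ℝ) (α : ℝ) :
    (1 + α ^ 2 • (N * Nᵀ)).PosDef := by
  apply Matrix.PosDef.add_posSemidef Matrix.PosDef.one
  have hP : (N * Nᴴ).PosSemidef := posSemidef_self_mul_conjTranspose N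
  rw [conjTranspose_eq_transpose_of_trivial] at hP
  refine ⟨?_, fun x => ?_⟩
  · unfold Matrix.IsHermitian
    rw [conjTranspose_smul, hP.1]
    congr 1
  · have := hP.2 x
    have e : (x.sum fun i xi => x.sum fun j xj => star xi * (α ^ 2 • (N * Nᵀ)) i j * xj) =
        α ^ 2 * (x.sum fun i xi => x.sum fun j xj => star xi * (N * Nᵀ) i j * xj) := by
      simp only [Finsupp.sum, Finset.mul_sum, Matrix.smul_apply, smul_eq_mul]
      exact Finset.sum_congr rfl fun i _ => Finset.sum_congr rfl fun j _ => by ring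
    rw [e]
    exact mul_nonneg (by positivity) this

theorem cgo_cross_norm_bound (m n : ℕ) (M : Matrix (Fin m) (Fin n) ℝ) (α : ℝ)
    (a : Fin m → ℝ) (b : Fin n → ℝ) (u : Fin m → ℝ) (v : Fin n → ℝ)
    (hu : u = ((1 + α ^ 2 • (M * Mᵀ))⁻¹).mulVec (a + α • M.mulVec b))
    (hv : v = ((1 + α ^ 2 • (Mᵀ * M))⁻¹).mulVec (-b + α • Mᵀ.mulVec a)) :
    α ^ 2 * ((Mᵀ.mulVec u) ⬝ᵥ (Mᵀ.mulVec u) + (M.mulVec v) ⬝ᵥ (M.mulVec v)) ≤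
      a ⬝ᵥ a + b ⬝ᵥ b := by
  have hA : (1 + α ^ 2 • (M * Mᵀ)).PosDef := cgo_aux_posdef M α
  have hB : (1 + α ^ 2 • (Mᵀ * M)).PosDef := by
    simpa using cgo_aux_posdef Mᵀ α
  have hAu : (1 + α ^ 2 • (M * Mᵀ)) *ᵥ u = a + α • M.mulVec b := by
    rw [hu, mulVec_mulVec, Matrix.mul_nonsing_inv _
      ((Matrix.isUnit_iff_isUnit_det _).mp hA.isUnit), one_mulVec]
  have hBv : (1 + α ^ 2 • (Mᵀ * M)) *ᵥ v = -b + α • Mᵀ.mulVec a := by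
    rw [hv, mulVec_mulVec, Matrix.mul_nonsing_inv _
      ((Matrix.isUnit_iff_isUnit_det _).mp hB.isUnit), one_mulVec]
  set p := Mᵀ *ᵥ u with hp
  set q := M *ᵥ v with hq
  have hE1 : u ⬝ᵥ u + α ^ 2 * (p ⬝ᵥ p) = a ⬝ᵥ u + α * (p ⬝ᵥ b) := by
    have := congrArg (fun w => u ⬝ᵥ w) hAu
    simp only [add_mulVec, one_mulVec, smul_mulVec, ← mulVec_mulVec,
      dotProduct_add, dotProduct_smul, smul_eq_mul] at this
    rw [dotProduct_mulVec u M, ← Matrix.mulVec_transpose, ← hp,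
        dotProduct_mulVec u M, ← Matrix.mulVec_transpose, ← hp] at this
    rw [this, dotProduct_comm a u]
  have hE2 : v ⬝ᵥ v + α ^ 2 * (q ⬝ᵥ q) = -(b ⬝ᵥ v) + α * (q ⬝ᵥ a) := by
    have := congrArg (fun w => v ⬝ᵥ w) hBv
    simp only [add_mulVec, one_mulVec, smul_mulVec, ← mulVec_mulVec,
      dotProduct_add, dotProduct_smul, smul_eq_mul, neg_dotProduct, dotProduct_neg] at this
    rw [dotProduct_mulVec v Mᵀ, ← Matrix.mulVec_transpose, transpose_transpose, ← hq,
        dotProduct_mulVec v Mᵀ, ← Matrix.mulVec_transpose, transpose_transpose, ← hq] at this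
    rw [this, dotProduct_comm b v]
  have hE3 : α * (u ⬝ᵥ q) = α * (p ⬝ᵥ v) := by
    rw [hq, dotProduct_mulVec u M, ← Matrix.mulVec_transpose, hp]
  have h1 : ∀ (k : ℕ) (w : Fin k → ℝ), 0 ≤ w ⬝ᵥ w := fun k w => by
    have : w ⬝ᵥ w = ∑ i, w i * w i := rfl
    rw [this]; exact Finset.sum_nonneg fun i _ => mul_self_nonneg _
  have hU : 0 ≤ u ⬝ᵥ u := h1 _ u
  have hV : 0 ≤ v ⬝ᵥ v := h1 _ v
  have h0 : 0 ≤ (a - (u + α • q)) ⬝ᵥ (a - (u + α • q)) +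
      (b - (α • p - v)) ⬝ᵥ (b - (α • p - v)) :=
    add_nonneg (h1 _ _) (h1 _ _)
  simp only [dotProduct_sub, sub_dotProduct, dotProduct_add, add_dotProduct,
    dotProduct_smul, smul_dotProduct, smul_eq_mul] at h0
  rw [dotProduct_comm u a, dotProduct_comm q a, dotProduct_comm p b, dotProduct_comm v b,
      dotProduct_comm q u, dotProduct_comm v p] at h0
  rw [dotProduct_comm p b] at hE1
  rw [dotProduct_comm q a] at hE2
  ring_nf at h0 hE1 hE2 hE3 ⊢
  clear hu hv hAu hBv hA hB hp hq
  clear_value p q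
  linarith [hE1, hE2, hE3, h0, hU, hV]
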